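/- Let g > 0 and let h : ℝ → ℂ satisfy lim_{s→+∞} s^g h(s) = 1, so the node filter decays like 1/s^g and its frequency-cutoff time constant τ satisfies τ^g = h(0). Assume ‖h(0)W‖ < 1 and Σ_{n=1}^∞ N^n |κ_n| |h(0)|^n < 1, and set G(s) := eᵀ(I − h(s)W)^{-1} e · h(s). Then the time constant τ_G of the network transfer function, defined by τ_G^g := G(0) / (lim_{s→+∞} s^g G(s)), satisfies τ_G^g = f(τ^g), where f(z) := z / (1 − Σ_{n=1}^∞ N^n κ_n z^n). (Theorem 2 of the paper: the network time constant is determined from the node time constant by the motif cumulant feedback function f.) -/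

import Mathlib

open Matrix Filter

/-- **Theorem 2 of the paper.** Suppose the node filter decays like `1/s^g`
(`s^g h(s) → 1` as `s → +∞`), so its frequency-cutoff time constant `τ` satisfies
`τ^g = h(0)`.  Assume `‖h(0) • W‖ < 1` and `∑_{n≥1} N^n |κ_n| |h(0)|^n < 1`, and let
`G(s) = eᵀ (I - h(s)W)⁻¹ e ⬝ h(s)` be the network transfer function.  Then the network
time constant `τ_G`, defined by `τ_G^g = G(0) / lim_{s→∞} s^g G(s)`, satisfies
`τ_G^g = f(τ^g)` where `f(z) = z / (1 - ∑_{n≥1} N^n κ_n z^n)`. -/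
theorem network_time_constant_motif_cumulants
    (N : ℕ) (hN : 0 < N) (W : Matrix (Fin N) (Fin N) ℂ)
    (e : Fin N → ℂ) (he : e = fun _ => ((Real.sqrt N : ℂ))⁻¹)
    (μ κ : ℕ → ℂ)
    (hμ0 : μ 0 = 1)
    (hμ : ∀ n : ℕ, 1 ≤ n →
      μ n = (1 / (N : ℂ) ^ (n + 1)) * ∑ i : Fin N, ∑ j : Fin N, (W ^ n) i j)
    (hκ : ∀ n : ℕ, 1 ≤ n →
      κ n = μ n - ∑ k ∈ Finset.Ico 1 n, κ k * μ (n - k))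
    (g : ℝ) (hg : 0 < g)
    (h : ℝ → ℂ)
    (hlim : Tendsto (fun s : ℝ => ((s ^ g : ℝ) : ℂ) * h s) atTop (nhds 1))
    (hnorm : ‖Matrix.toEuclideanCLM (𝕜 := ℂ) (h 0 • W)‖ < 1)
    (S : ℝ)
    (hS : HasSum (fun n : ℕ =>
      (N : ℝ) ^ (n + 1) * ‖κ (n + 1)‖ * ‖h 0‖ ^ (n + 1)) S)
    (hS1 : S < 1)
    (G : ℝ → ℂ)
    (hG : G = fun s : ℝ => e ⬝ᵥ (1 - h s • W)⁻¹.mulVec e * h s)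
    (L : ℂ)
    (hL : Tendsto (fun s : ℝ => ((s ^ g : ℝ) : ℂ) * G s) atTop (nhds L)) :
    G 0 / L =
      h 0 / (1 - ∑' n : ℕ, (N : ℂ) ^ (n + 1) * κ (n + 1) * (h 0) ^ (n + 1)) := by
  subst hG he
  set f := Matrix.toEuclideanCLM (𝕜 := ℂ) (n := Fin N) with hf
  set e : Fin N → ℂ := fun _ => ((Real.sqrt N : ℂ))⁻¹ with hedef
  set v : EuclideanSpace ℂ (Fin N) := (WithLp.equiv 2 (Fin N → ℂ)).symm e with hv
  -- basic facts
  have hNR : (0:ℝ) < N := Nat.cast_pos.2 hN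
  have hsq : ((Real.sqrt N : ℂ)) * ((Real.sqrt N : ℂ)) = (N : ℂ) := by
    rw [← Complex.ofReal_mul, Real.mul_self_sqrt hNR.le]
    norm_num
  have hNC : ((N:ℂ)) ≠ 0 := Nat.cast_ne_zero.2 hN.ne'
  have hee : e ⬝ᵥ e = 1 := by
    simp only [dotProduct, hedef]
    rw [Finset.sum_const, Finset.card_univ, Fintype.card_fin, ← mul_inv, hsq]
    simp [nsmul_eq_mul, hNC]
  -- dot product as inner product
  have dotmul : ∀ M : Matrix (Fin N) (Fin N) ℂ,
      e ⬝ᵥ M.mulVec e = inner (𝕜 := ℂ) v (f M v) := by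
    intro M
    rw [hv, hf, WithLp.equiv_symm_apply, Matrix.toEuclideanCLM_toLp, PiLp.inner_apply]
    simp only [PiLp.toLp_apply]
    rw [dotProduct]
    refine Finset.sum_congr rfl fun i _ => ?_
    have hc : (starRingEnd ℂ) (e i) = e i := by
      rw [hedef]
      exact (map_inv₀ (starRingEnd ℂ) _).trans (by rw [Complex.conj_ofReal])
    rw [RCLike.inner_apply, hc, mul_comm]

  -- the CLM T and the matrix A
  set T : EuclideanSpace ℂ (Fin N) →L[ℂ] EuclideanSpace ℂ (Fin N) := f (h 0 • W) with hT
  set A : Matrix (Fin N) (Fin N) ℂ := 1 - h 0 • W with hA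
  have hfA : f A = 1 - T := by rw [hA, map_sub, _root_.map_one, hT]
  have hunit : IsUnit (f A) := hfA ▸ isUnit_one_sub_of_norm_lt_one hnorm
  have hunitA : IsUnit A := by
    have h2 := hunit.map f.symm
    rwa [StarAlgEquiv.symm_apply_apply] at h2
  have hdet : IsUnit A.det := (Matrix.isUnit_iff_isUnit_det A).1 hunitA
  have hAiA : A⁻¹ * A = 1 := Matrix.nonsing_inv_mul A hdet
  have hgeom : (1 - T) * (∑' n : ℕ, T ^ n) = 1 := mul_neg_geom_series T hnorm
  have hfAinv : f A⁻¹ = ∑' n : ℕ, T ^ n := by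
    calc f A⁻¹ = f A⁻¹ * ((1 - T) * ∑' n : ℕ, T ^ n) := by rw [hgeom, mul_one]
    _ = (f A⁻¹ * f A) * ∑' n : ℕ, T ^ n := by rw [← hfA, mul_assoc]
    _ = ∑' n : ℕ, T ^ n := by rw [← _root_.map_mul, hAiA, _root_.map_one, one_mul]
  -- the scalar sequence a
  set a : ℕ → ℂ := fun n => e ⬝ᵥ ((h 0 • W) ^ n).mulVec e with ha
  have haT : ∀ n : ℕ, a n = inner (𝕜 := ℂ) v ((T ^ n) v) := by
    intro n
    rw [ha]
    show e ⬝ᵥ ((h 0 • W) ^ n).mulVec e = _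
    rw [dotmul, _root_.map_pow]
  have hsumT : Summable (fun n : ℕ => T ^ n) := summable_geometric_of_norm_lt_one hnorm
  have hMa : HasSum a (e ⬝ᵥ A⁻¹.mulVec e) := by
    have h1 : HasSum (fun n : ℕ => T ^ n) (f A⁻¹) := hfAinv ▸ hsumT.hasSum
    have h2 := (h1.mapL (ContinuousLinearMap.apply ℂ (EuclideanSpace ℂ (Fin N)) v)).mapL
      (innerSL ℂ v)
    rw [dotmul]
    convert h2 using 2 with n
    · rfl
    · rw [haT]; rfl
    · rfl
  have hvnorm : ‖v‖ = 1 := by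
    rw [EuclideanSpace.norm_eq]
    have h1 : ∀ i : Fin N, ‖v i‖ = (Real.sqrt N)⁻¹ := by
      intro i
      rw [hv, WithLp.equiv_symm_apply, PiLp.toLp_apply, hedef]
      rw [norm_inv, Complex.norm_real, Real.norm_eq_abs, abs_of_nonneg (Real.sqrt_nonneg _)]
    simp only [h1]
    rw [Finset.sum_const, Finset.card_univ, Fintype.card_fin]
    rw [inv_pow, Real.sq_sqrt hNR.le, nsmul_eq_mul,
      mul_inv_cancel₀ (ne_of_gt hNR), Real.sqrt_one]
  have hanorm : ∀ n : ℕ, ‖a n‖ ≤ ‖T‖ ^ n := by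
    intro n
    rw [haT]
    calc ‖inner (𝕜 := ℂ) v ((T ^ n) v)‖ ≤ ‖v‖ * ‖(T ^ n) v‖ := norm_inner_le_norm _ _
    _ ≤ ‖v‖ * (‖T ^ n‖ * ‖v‖) := by
        gcongr; exact ContinuousLinearMap.le_opNorm _ _
    _ = ‖T ^ n‖ := by rw [hvnorm, one_mul, mul_one]
    _ ≤ ‖T‖ ^ n := by
        rcases Nat.eq_zero_or_pos n with rfl | hn
        · rw [pow_zero, pow_zero]
          exact le_trans (le_of_eq rfl) ContinuousLinearMap.norm_id_le
        · exact norm_pow_le' T hn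
  have hasummable : Summable fun n : ℕ => ‖a n‖ :=
    Summable.of_nonneg_of_le (fun n => norm_nonneg _) hanorm
      (summable_geometric_of_lt_one (norm_nonneg T) hnorm)
  have han : ∀ n : ℕ, a n = (N:ℂ) ^ n * (h 0) ^ n * μ n := by
    intro n
    rcases Nat.eq_zero_or_pos n with rfl | hn
    · show e ⬝ᵥ ((h 0 • W) ^ 0).mulVec e = _
      rw [pow_zero, Matrix.one_mulVec, hee, hμ0]
      ring
    · show e ⬝ᵥ ((h 0 • W) ^ n).mulVec e = _
      rw [smul_pow, Matrix.smul_mulVec, dotProduct_smul, smul_eq_mul, hμ n hn]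
      have hW : e ⬝ᵥ (W ^ n).mulVec e
          = ((N:ℂ))⁻¹ * ∑ i : Fin N, ∑ j : Fin N, (W ^ n) i j := by
        rw [dotProduct, Finset.mul_sum]
        refine Finset.sum_congr rfl fun i _ => ?_
        simp only [Matrix.mulVec, dotProduct]
        rw [Finset.mul_sum, Finset.mul_sum]
        refine Finset.sum_congr rfl fun j _ => ?_
        show ((Real.sqrt N : ℂ))⁻¹ * ((W ^ n) i j * ((Real.sqrt N : ℂ))⁻¹)
          = (N:ℂ)⁻¹ * (W ^ n) i j
        rw [mul_comm ((W ^ n) i j), ← mul_assoc, ← mul_inv, hsq]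
      rw [hW]
      have hNpow : ((N:ℂ)) ^ (n+1) ≠ 0 := pow_ne_zero _ hNC
      field_simp
      ring
  have ha0 : a 0 = 1 := by rw [han 0]; simp [hμ0]
  have hasum : Summable a := hasummable.of_norm
  -- the cumulant sequence b
  set b : ℕ → ℂ := fun n => if n = 0 then 0 else (N:ℂ) ^ n * κ n * (h 0) ^ n with hb
  have hb0 : b 0 = 0 := rfl
  have hbs : ∀ n : ℕ, b (n+1) = (N:ℂ) ^ (n+1) * κ (n+1) * (h 0) ^ (n+1) := by
    intro n; rw [hb]; simp
  have hbnorm : ∀ n : ℕ, ‖b (n+1)‖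
      = (N : ℝ) ^ (n + 1) * ‖κ (n + 1)‖ * ‖h 0‖ ^ (n + 1) := by
    intro n
    rw [hbs, norm_mul, norm_mul, norm_pow, norm_pow]
    simp
  have hbsummable : Summable fun n : ℕ => ‖b n‖ := by
    refine (summable_nat_add_iff 1).1 ?_
    exact hS.summable.congr fun n => (hbnorm n).symm
  have htsumb : ∑' n : ℕ, b n = ∑' n : ℕ, (N:ℂ) ^ (n+1) * κ (n+1) * (h 0) ^ (n+1) := by
    rw [Summable.tsum_eq_zero_add hbsummable.of_norm, hb0, zero_add]
    exact tsum_congr hbs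
  set B : ℂ := ∑' n : ℕ, (N:ℂ) ^ (n+1) * κ (n+1) * (h 0) ^ (n+1) with hB
  have hsum' : Summable fun n : ℕ => ‖(N:ℂ) ^ (n+1) * κ (n+1) * (h 0) ^ (n+1)‖ := by
    refine hS.summable.congr fun n => ?_
    rw [← hbnorm, hbs]
  have hBle : ‖B‖ ≤ S := by
    rw [hB, ← hS.tsum_eq]
    refine (norm_tsum_le_tsum_norm hsum').trans (le_of_eq ?_)
    refine tsum_congr fun n => ?_
    rw [← hbs, hbnorm]
  have hB1 : (1 : ℂ) - B ≠ 0 := by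
    intro hc
    rw [sub_eq_zero] at hc
    have hBlt : ‖B‖ < 1 := lt_of_le_of_lt hBle hS1
    rw [← hc] at hBlt
    simp at hBlt
  -- Cauchy product
  have hcauchy : (∑' n, a n) * (∑' n, b n)
      = ∑' n : ℕ, ∑ k ∈ Finset.range (n+1), a k * b (n - k) :=
    tsum_mul_tsum_eq_tsum_sum_range_of_summable_norm hasummable hbsummable
  have hcsummable : Summable fun n : ℕ => ∑ k ∈ Finset.range (n+1), a k * b (n - k) :=
    (summable_norm_sum_mul_range_of_summable_norm hasummable hbsummable).of_norm
  -- the recursion for μ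
  have hmurec : ∀ m : ℕ, ∑ i ∈ Finset.range (m+1), κ (i+1) * μ (m - i) = μ (m+1) := by
    intro m
    have h1 := hκ (m+1) (Nat.succ_le_succ (Nat.zero_le m))
    have h2 : ∑ k ∈ Finset.Ico 1 (m+1), κ k * μ (m+1-k)
        = ∑ i ∈ Finset.range m, κ (1+i) * μ (m - i) := by
      rw [Finset.sum_Ico_eq_sum_range, Nat.add_sub_cancel]
      refine Finset.sum_congr rfl fun i hi => ?_
      have e5 : m + 1 - (1 + i) = m - i := by omega
      rw [e5]
    rw [Finset.sum_range_succ, Nat.sub_self, hμ0, mul_one]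
    have h3 : ∑ i ∈ Finset.range m, κ (i+1) * μ (m - i)
        = ∑ i ∈ Finset.range m, κ (1+i) * μ (m - i) :=
      Finset.sum_congr rfl fun i _ => by rw [add_comm]
    rw [h3, ← h2, h1]
    ring
  -- value of the Cauchy product terms
  have hcval : ∀ n : ℕ, ∑ k ∈ Finset.range (n+1), a k * b (n - k)
      = if n = 0 then 0 else a n := by
    intro n
    have hflip : ∑ k ∈ Finset.range (n+1), a k * b (n - k)
        = ∑ k ∈ Finset.range (n+1), a (n - k) * b k := by
      rw [← Finset.sum_range_reflect (fun k => a k * b (n - k)) (n+1)]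
      refine Finset.sum_congr rfl fun i hi => ?_
      rw [Finset.mem_range, Nat.lt_succ_iff] at hi
      have e1 : n + 1 - 1 - i = n - i := by omega
      rw [e1, Nat.sub_sub_self hi]
    rw [hflip]
    rcases n with _ | m
    · simp [hb0]
    · rw [if_neg (Nat.succ_ne_zero m)]
      rw [Finset.sum_range_succ' (fun k => a (m + 1 - k) * b k) (m+1)]
      rw [hb0, mul_zero, add_zero]
      rw [han (m+1), ← hmurec m, Finset.mul_sum]
      refine Finset.sum_congr rfl fun i hi => ?_
      rw [Finset.mem_range, Nat.lt_succ_iff] at hi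
      have e1 : m + 1 - (i + 1) = m - i := by omega
      have e2 : m - i + (i + 1) = m + 1 := by omega
      rw [e1, han (m - i), hbs i, ← e2, pow_add, pow_add]
      ring
  -- combine
  set Ma : ℂ := e ⬝ᵥ A⁻¹.mulVec e with hMadef
  have hMaval : Ma = ∑' n, a n := hMa.tsum_eq.symm
  have htsum_c : ∑' n : ℕ, ∑ k ∈ Finset.range (n+1), a k * b (n - k) = Ma - 1 := by
    rw [Summable.tsum_eq_zero_add hcsummable]
    have c0 : ∑ k ∈ Finset.range (0+1), a k * b (0 - k) = 0 := by
      rw [hcval 0]; rfl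
    rw [c0, zero_add]
    have hfn : (fun n : ℕ => ∑ k ∈ Finset.range (n+1+1), a k * b (n+1-k))
        = fun n => a (n+1) := by
      funext n
      rw [hcval (n+1), if_neg (Nat.succ_ne_zero n)]
    rw [hfn, hMaval, Summable.tsum_eq_zero_add hasum, ha0]
    ring
  have hMaB : Ma * B = Ma - 1 := by
    rw [hMaval, ← htsumb, hcauchy, htsum_c, hMaval]
  have hMu : Ma * (1 - B) = 1 := by
    rw [mul_sub, mul_one, hMaB]
    ring
  -- Part A : L = 1
  have hh0 : Tendsto h atTop (nhds 0) := by
    have h1 : Tendsto (fun s : ℝ => s ^ g) atTop atTop := tendsto_rpow_atTop hg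
    have h2 : Tendsto (fun s : ℝ => ((s ^ g : ℝ) : ℂ)⁻¹) atTop (nhds 0) := by
      have h3 : Tendsto (fun s : ℝ => (s ^ g)⁻¹) atTop (nhds 0) := h1.inv_tendsto_atTop
      have h4 := (Complex.continuous_ofReal.tendsto 0).comp h3
      simpa [Function.comp_def, Complex.ofReal_inv] using h4
    have h5 : ∀ᶠ s : ℝ in atTop,
        ((s ^ g : ℝ) : ℂ)⁻¹ * (((s ^ g : ℝ) : ℂ) * h s) = h s := by
      filter_upwards [eventually_gt_atTop (0:ℝ)] with s hs
      have hne : ((s ^ g : ℝ) : ℂ) ≠ 0 :=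
        Complex.ofReal_ne_zero.2 (Real.rpow_pos_of_pos hs g).ne'
      rw [inv_mul_cancel_left₀ hne]
    have h6 := h2.mul hlim
    rw [zero_mul] at h6
    exact Tendsto.congr' h5 h6
  have h10 : ((1 : Matrix (Fin N) (Fin N) ℂ) - (0:ℂ) • W) = 1 := by simp
  have hphi : ContinuousAt (fun x : ℂ => e ⬝ᵥ (1 - x • W)⁻¹.mulVec e) 0 := by
    have hc1 : Continuous fun x : ℂ => (1 : Matrix (Fin N) (Fin N) ℂ) - x • W :=
      continuous_const.sub (continuous_id.smul continuous_const)
    have hc2 : ContinuousAt Inv.inv ((1 : Matrix (Fin N) (Fin N) ℂ) - (0:ℂ) • W) := by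
      rw [h10]
      refine continuousAt_matrix_inv _ ?_
      rw [Matrix.det_one]
      exact NormedRing.inverse_continuousAt (1 : ℂˣ)
    have hc3 : ContinuousAt (fun x : ℂ => ((1 : Matrix (Fin N) (Fin N) ℂ) - x • W)⁻¹) 0 :=
      ContinuousAt.comp (f := fun x : ℂ => (1 : Matrix (Fin N) (Fin N) ℂ) - x • W)
        hc2 hc1.continuousAt
    have hc4 : Continuous fun M : Matrix (Fin N) (Fin N) ℂ => e ⬝ᵥ M.mulVec e :=
      (continuous_const : Continuous fun _ : Matrix (Fin N) (Fin N) ℂ => e).dotProduct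
        (continuous_id.matrix_mulVec continuous_const)
    exact hc4.continuousAt.comp hc3
  have hval : e ⬝ᵥ ((1 : Matrix (Fin N) (Fin N) ℂ) - (0:ℂ) • W)⁻¹.mulVec e = 1 := by
    rw [h10, inv_one, Matrix.one_mulVec, hee]
  have hφh : Tendsto (fun s : ℝ => e ⬝ᵥ (1 - h s • W)⁻¹.mulVec e) atTop (nhds 1) := by
    have := hphi.tendsto.comp hh0
    rw [hval] at this
    exact this
  have hlim2 : Tendsto (fun s : ℝ =>
      ((s ^ g : ℝ) : ℂ) * (e ⬝ᵥ (1 - h s • W)⁻¹.mulVec e * h s)) atTop (nhds 1) := by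
    have h7 := hlim.mul hφh
    rw [one_mul] at h7
    refine h7.congr fun s => ?_
    ring
  have hL1 : L = 1 := tendsto_nhds_unique hL hlim2
  -- final assembly
  show e ⬝ᵥ (1 - h 0 • W)⁻¹.mulVec e * h 0 / L = h 0 / (1 - B)
  rw [hL1, div_one]
  have hMg : e ⬝ᵥ (1 - h 0 • W)⁻¹.mulVec e = Ma := rfl
  rw [hMg, eq_div_iff hB1, mul_comm Ma (h 0), mul_assoc, hMu, mul_one]
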